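/- arXiv:0712.1665 — 3 statements merged into one kernel-verified Lean document; each statement's English description precedes it below -/
import Mathlib

section
/- Let q ≥ 3 and define C(q,a) for (a,q)=1 by C(q,a)^{φ(q)} = e^{-γ} ∏_p (1 - 1/p)^{α(p;q,a)} with α(p;q,a) = φ(q)-1 if p ≡ a (mod q) and α(p;q,a) = -1 otherwise (conditionally convergent product over primes in increasing order, C(q,a) > 0). Then ∏_{a mod q, (a,q)=1} C(q,a) = e^{-γ} · q/φ(q). -/
open Filter Real in
private lemma prod_zpow_eq_zpow_sum {x : ℝ} (hx : x ≠ 0) (s : Finset ℕ) (f : ℕ → ℤ) :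
    ∏ a ∈ s, x ^ f a = x ^ (∑ a ∈ s, f a) := by
  classical
  induction s using Finset.induction with
  | empty => simp
  | @insert _ _ h ih => rw [Finset.prod_insert h, Finset.sum_insert h, zpow_add₀ hx, ih]

open Filter Real in
/-- If `C a > 0` satisfies `C(q,a)^φ(q) = e^(-γ) ∏_p (1 - 1/p)^(α(p;q,a))` (the product over
primes taken in increasing order, as a limit of partial products), where
`α(p;q,a) = φ(q) - 1` if `p ≡ a (mod q)` and `α(p;q,a) = -1` otherwise, then
`∏_{a mod q, (a,q)=1} C(q,a) = e^(-γ) q / φ(q)`. -/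
theorem prod_mertens_constants {q : ℕ} (hq : 3 ≤ q) (C : ℕ → ℝ)
    (hpos : ∀ a, Nat.Coprime a q → 0 < C a)
    (hC : ∀ a, Nat.Coprime a q →
      Tendsto (fun N : ℕ => ∏ p ∈ Finset.filter Nat.Prime (Finset.range N),
          (1 - 1 / (p : ℝ)) ^ (if p % q = a % q then (q.totient : ℤ) - 1 else -1))
        atTop (nhds (Real.eulerMascheroniConstant.exp * C a ^ q.totient))) :
    ∏ a ∈ Finset.filter (fun a => Nat.Coprime a q) (Finset.range q), C a
      = Real.exp (-Real.eulerMascheroniConstant) * q / q.totient := by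
  classical
  have hq0 : 0 < q := by omega
  have hφpos : 0 < q.totient := Nat.totient_pos.mpr hq0
  set S := Finset.filter (fun a => Nat.Coprime a q) (Finset.range q) with hS
  have hcard : S.card = q.totient := by
    rw [Nat.totient]
    congr 1
    apply Finset.filter_congr
    intro a _
    simp [Nat.Coprime, Nat.gcd_comm]
  have hmemS : ∀ a, a ∈ S ↔ a < q ∧ Nat.Coprime a q := by
    intro a; simp [hS, Finset.mem_filter, Finset.mem_range]
  set K : ℝ := ∏ p ∈ q.primeFactors, (1 - 1 / (p : ℝ)) ^ (-(q.totient : ℤ)) with hK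
  -- the product over a of the partial products tends to the product of limits
  have hT : Tendsto (fun N : ℕ => ∏ a ∈ S,
      ∏ p ∈ Finset.filter Nat.Prime (Finset.range N),
        (1 - 1 / (p : ℝ)) ^ (if p % q = a % q then (q.totient : ℤ) - 1 else -1))
      atTop (nhds (∏ a ∈ S, Real.eulerMascheroniConstant.exp * C a ^ q.totient)) := by
    apply tendsto_finset_prod
    intro a ha
    exact hC a ((hmemS a).mp ha).2
  -- but the product over a is eventually constant, equal to K
  have key : ∀ N, q + 1 ≤ N → (∏ a ∈ S,
      ∏ p ∈ Finset.filter Nat.Prime (Finset.range N),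
        (1 - 1 / (p : ℝ)) ^ (if p % q = a % q then (q.totient : ℤ) - 1 else -1)) = K := by
    intro N hN
    rw [Finset.prod_comm]
    have hinner : ∀ p ∈ Finset.filter Nat.Prime (Finset.range N),
        (∏ a ∈ S, (1 - 1 / (p : ℝ)) ^ (if p % q = a % q then (q.totient : ℤ) - 1 else -1))
          = if p ∣ q then (1 - 1 / (p : ℝ)) ^ (-(q.totient : ℤ)) else 1 := by
      intro p hp
      have hpp : p.Prime := (Finset.mem_filter.mp hp).2
      have hp2 : (2 : ℝ) ≤ (p : ℝ) := by exact_mod_cast hpp.two_le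
      have hbne : (1 - 1 / (p : ℝ)) ≠ 0 := by
        have : 1 / (p : ℝ) < 1 := by
          rw [div_lt_one (by linarith)]; linarith
        intro h; nlinarith
      have hmod : ∀ a ∈ S, a % q = a := by
        intro a ha; exact Nat.mod_eq_of_lt ((hmemS a).mp ha).1
      calc (∏ a ∈ S, (1 - 1 / (p : ℝ)) ^ (if p % q = a % q then (q.totient : ℤ) - 1 else -1))
          = ∏ a ∈ S, (1 - 1 / (p : ℝ)) ^ (if p % q = a then (q.totient : ℤ) - 1 else -1) := by
            apply Finset.prod_congr rfl
            intro a ha; rw [hmod a ha]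
        _ = (1 - 1 / (p : ℝ)) ^ (∑ a ∈ S, if p % q = a then (q.totient : ℤ) - 1 else -1) :=
            prod_zpow_eq_zpow_sum hbne _ _
        _ = if p ∣ q then (1 - 1 / (p : ℝ)) ^ (-(q.totient : ℤ)) else 1 := by
            have hsum : (∑ a ∈ S, if p % q = a then (q.totient : ℤ) - 1 else -1)
                = (if p % q ∈ S then (q.totient : ℤ) else 0) - q.totient := by
              have : ∀ a ∈ S, (if p % q = a then (q.totient : ℤ) - 1 else -1)
                  = (if p % q = a then (q.totient : ℤ) else 0) + (-1) := by
                intro a _; split <;> ring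
              rw [Finset.sum_congr rfl this, Finset.sum_add_distrib, Finset.sum_ite_eq,
                Finset.sum_const, hcard]
              push_cast; ring
            by_cases hd : p ∣ q
            · have hnot : p % q ∉ S := by
                intro hmem
                have hcop : Nat.Coprime (p % q) q := ((hmemS _).mp hmem).2
                have : Nat.gcd q p = p := Nat.gcd_eq_right hd
                rw [Nat.Coprime, ← Nat.gcd_rec, this] at hcop
                exact hpp.one_lt.ne' hcop
              rw [hsum, if_neg hnot, if_pos hd]
              norm_num
            · have hmem : p % q ∈ S := by
                rw [hmemS]
                refine ⟨Nat.mod_lt _ hq0, ?_⟩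
                have hcop : Nat.Coprime p q := (hpp.coprime_iff_not_dvd).mpr hd
                rw [Nat.Coprime, ← Nat.gcd_rec]
                rw [Nat.Coprime, Nat.gcd_comm] at hcop
                exact hcop
              rw [hsum, if_pos hmem, if_neg hd]
              norm_num
    rw [Finset.prod_congr rfl hinner, ← Finset.prod_filter]
    congr 1
    ext p
    simp only [Finset.mem_filter, Finset.mem_range, Nat.mem_primeFactors]
    constructor
    · rintro ⟨⟨_, hp⟩, hd⟩; exact ⟨hp, hd, by omega⟩
    · rintro ⟨hp, hd, _⟩
      exact ⟨⟨lt_of_le_of_lt (Nat.le_of_dvd hq0 hd) (by omega), hp⟩, hd⟩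
  have hconst : Tendsto (fun N : ℕ => ∏ a ∈ S,
      ∏ p ∈ Finset.filter Nat.Prime (Finset.range N),
        (1 - 1 / (p : ℝ)) ^ (if p % q = a % q then (q.totient : ℤ) - 1 else -1))
      atTop (nhds K) := by
    apply Tendsto.congr' _ tendsto_const_nhds
    filter_upwards [eventually_ge_atTop (q + 1)] with N hN
    exact (key N hN).symm
  have hmain : (∏ a ∈ S, Real.eulerMascheroniConstant.exp * C a ^ q.totient) = K :=
    tendsto_nhds_unique hT hconst
  -- now compute
  set X : ℝ := ∏ a ∈ S, C a with hX
  have hXpos : 0 < X := Finset.prod_pos fun a ha => hpos a ((hmemS a).mp ha).2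
  have hL : (∏ a ∈ S, Real.eulerMascheroniConstant.exp * C a ^ q.totient)
      = (Real.exp Real.eulerMascheroniConstant * X) ^ q.totient := by
    rw [Finset.prod_mul_distrib, Finset.prod_const, hcard, mul_pow, Finset.prod_pow]
  -- K = (q/φ)^φ
  have hφR : (q.totient : ℝ) = q * ∏ p ∈ q.primeFactors, (1 - 1 / (p : ℝ)) := by
    have := Nat.totient_eq_mul_prod_factors q
    have h2 := congrArg (fun x : ℚ => (x : ℝ)) this
    push_cast at h2
    simpa [one_div] using h2
  have hqR : (0 : ℝ) < q := by exact_mod_cast hq0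
  have hφRpos : (0 : ℝ) < q.totient := by exact_mod_cast hφpos
  have hKval : K = ((q : ℝ) / q.totient) ^ q.totient := by
    have hprodval : (∏ p ∈ q.primeFactors, (1 - 1 / (p : ℝ))) = (q.totient : ℝ) / q := by
      field_simp [hφR]
      rw [hφR]; ring
    rw [hK, Finset.prod_zpow, hprodval, zpow_neg, zpow_natCast, ← inv_pow, inv_div]
  -- conclude
  have heq : (Real.exp Real.eulerMascheroniConstant * X) ^ q.totient
      = ((q : ℝ) / q.totient) ^ q.totient := by rw [← hL, hmain, hKval]
  have hbase : Real.exp Real.eulerMascheroniConstant * X = (q : ℝ) / q.totient := by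
    have h1 : (0:ℝ) ≤ Real.exp Real.eulerMascheroniConstant * X :=
      le_of_lt (mul_pos (Real.exp_pos _) hXpos)
    have h2 : (0:ℝ) ≤ (q : ℝ) / q.totient := le_of_lt (div_pos hqR hφRpos)
    exact (pow_left_strictMonoOn₀ (n := q.totient) hφpos.ne').eq_iff_eq h1 h2 |>.mp heq
  have hexp : Real.exp Real.eulerMascheroniConstant ≠ 0 := Real.exp_ne_zero _
  have hX' : X = (q : ℝ) / q.totient / Real.exp Real.eulerMascheroniConstant := by
    rw [eq_div_iff hexp, mul_comm]; exact hbase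
  show X = _
  rw [hX', Real.exp_neg]
  ring
end

section
/- Let q₁ | q₂ with q₁ ≥ 3 and (a, q₁) = 1, and let n = q₂/q₁. With C(q,a) defined as the Mertens constant satisfying ∏_{p ≤ x, p ≡ a mod q}(1-1/p) = C(q,a)(log x)^{-1/φ(q)}(1+o(1)), one has C(q₁, a) = ∏_{0 ≤ j < n, (a + j q₁, q₂) = 1} C(q₂, a + j q₁) · ∏_{p | q₂, p ≡ a mod q₁} (1 - 1/p). -/
open Finset

lemma exists_shift {q₁ n a : ℕ} (hn : 0 < n) (b : ℕ) (hb : b % q₁ = a % q₁) :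
    ∃ j < n, (a + j * q₁) % (n * q₁) = b % (n * q₁) := by
  have h1 : (q₁ : ℤ) ∣ (b : ℤ) - (a : ℤ) := (show a ≡ b [MOD q₁] from hb.symm).dvd
  obtain ⟨k, hk⟩ := h1
  refine ⟨(k % n).toNat, ?_, ?_⟩
  · have h2 : k % n < n := Int.emod_lt_of_pos k (by exact_mod_cast hn)
    omega
  · have hnn : (0:ℤ) ≤ k % n := Int.emod_nonneg k (by exact_mod_cast hn.ne')
    have hjk : (n : ℤ) ∣ k - (k % n).toNat := by
      rw [Int.toNat_of_nonneg hnn]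
      exact Int.dvd_self_sub_of_emod_eq rfl
    have hdd : ((n * q₁ : ℕ) : ℤ) ∣ (b : ℤ) - ((a : ℤ) + ((k % n).toNat : ℤ) * q₁) := by
      obtain ⟨t, ht⟩ := hjk
      have h3 : (b:ℤ) - ((a:ℤ) + ((k % n).toNat : ℤ) * q₁) = (k - (k % n).toNat) * q₁ := by
        linear_combination hk
      rw [h3, ht]
      exact ⟨t, by push_cast; ring⟩
    exact (Nat.modEq_iff_dvd (n := n * q₁)).mpr hdd

lemma inj_shift {q₁ n a : ℕ} (hq₁ : 0 < q₁) {j j' : ℕ} (hj : j < n) (hj' : j' < n)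
    (h : (a + j * q₁) % (n * q₁) = (a + j' * q₁) % (n * q₁)) : j = j' := by
  have h1 : ((n * q₁ : ℕ) : ℤ) ∣ ((a : ℤ) + j' * q₁) - ((a : ℤ) + j * q₁) :=
    (show a + j * q₁ ≡ a + j' * q₁ [MOD n * q₁] from h).dvd
  have h2 : ((a : ℤ) + j' * q₁) - ((a : ℤ) + j * q₁) = ((j' : ℤ) - j) * q₁ := by ring
  rw [h2] at h1
  push_cast at h1
  obtain ⟨t, ht⟩ : (n : ℤ) ∣ ((j' : ℤ) - j) := by
    rcases h1 with ⟨t, ht⟩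
    refine ⟨t, ?_⟩
    have hq : (q₁ : ℤ) ≠ 0 := by exact_mod_cast hq₁.ne'
    have hx : ((j':ℤ) - j) * q₁ = n * t * q₁ := by rw [ht]; ring
    exact mul_right_cancel₀ hq hx
  have hn' : (0:ℤ) < n := by exact_mod_cast lt_of_le_of_lt (Nat.zero_le j) hj
  have h4 : -(n:ℤ) < (n:ℤ) * t := by
    have : (j:ℤ) < n := by exact_mod_cast hj
    have : -(n:ℤ) < (j':ℤ) - j := by omega
    linarith [ht ▸ this]
  have h5 : (n:ℤ) * t < n := by
    have : (j':ℤ) < n := by exact_mod_cast hj'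
    have h6 : (j':ℤ) - j < n := by omega
    linarith [ht ▸ h6]
  have h6 : t ≤ 0 := by
    by_contra hcon
    push_neg at hcon
    have : (n:ℤ) * 1 ≤ n * t := mul_le_mul_of_nonneg_left (by omega) hn'.le
    rw [mul_one] at this; linarith
  have h7 : 0 ≤ t := by
    by_contra hcon
    push_neg at hcon
    have : (n:ℤ) * t ≤ n * (-1) := mul_le_mul_of_nonneg_left (by omega) hn'.le
    linarith
  have : t = 0 := le_antisymm h6 h7
  rw [this, mul_zero] at ht
  omega

lemma fiber_card_eq {q₁ q₂ : ℕ} [NeZero q₁] [NeZero q₂] (hdvd : q₁ ∣ q₂)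
    (u : (ZMod q₁)ˣ) :
    (univ.filter (fun v : (ZMod q₂)ˣ => ZMod.unitsMap hdvd v = u)).card =
    (univ.filter (fun v : (ZMod q₂)ˣ => ZMod.unitsMap hdvd v = 1)).card := by
  obtain ⟨w, hw⟩ := ZMod.unitsMap_surjective hdvd u
  apply Finset.card_bij' (fun v _ => w⁻¹ * v) (fun v _ => w * v)
  · intro v hv
    simp only [mem_filter, mem_univ, true_and] at hv ⊢
    rw [map_mul, map_inv, hw, hv, inv_mul_cancel]
  · intro v hv
    simp only [mem_filter, mem_univ, true_and] at hv ⊢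
    rw [map_mul, hw, hv, mul_one]
  · intro v _; simp [← mul_assoc]
  · intro v _; simp [← mul_assoc]

lemma card_J {q₁ q₂ a n : ℕ} (hq₁ : 0 < q₁) (hq₂ : 0 < q₂) (hdvd : q₁ ∣ q₂)
    (ha : Nat.Coprime a q₁) (hq₂eq : q₂ = n * q₁) (hn : 0 < n) :
    ((Finset.range n).filter (fun j => Nat.Coprime (a + j * q₁) q₂)).card * q₁.totient
      = q₂.totient := by
  haveI : NeZero q₁ := ⟨hq₁.ne'⟩
  haveI : NeZero q₂ := ⟨hq₂.ne'⟩
  set f := ZMod.unitsMap hdvd with hf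
  have hcoe : ∀ v : (ZMod q₂)ˣ, (f v : ZMod q₁) = ZMod.castHom hdvd (ZMod q₁) (v : ZMod q₂) := by
    intro v
    rw [hf, ZMod.unitsMap_def]
    rfl
  have step2 : q₂.totient = q₁.totient *
      (univ.filter (fun v : (ZMod q₂)ˣ => f v = 1)).card := by
    rw [← ZMod.card_units_eq_totient q₂, ← ZMod.card_units_eq_totient q₁]
    rw [← Finset.card_univ (α := (ZMod q₂)ˣ)]
    rw [Finset.card_eq_sum_card_fiberwise (f := fun v => f v) (t := univ) (fun x _ => mem_univ _)]
    rw [Finset.sum_congr rfl (fun u _ => fiber_card_eq hdvd u), Finset.sum_const, card_univ]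
    simp [mul_comm]
    exact Or.inl rfl
  have step3 : ((Finset.range n).filter (fun j => Nat.Coprime (a + j * q₁) q₂)).card =
      (univ.filter (fun v : (ZMod q₂)ˣ => f v = ZMod.unitOfCoprime a ha)).card := by
    apply Finset.card_bij (fun j hj => ZMod.unitOfCoprime (a + j * q₁)
      ((Finset.mem_filter.mp hj).2))
    · intro j hj
      simp only [mem_filter, mem_univ, true_and]
      apply Units.ext
      rw [hcoe, ZMod.coe_unitOfCoprime, ZMod.coe_unitOfCoprime, map_natCast]
      push_cast
      simp
    · intro j hj j' hj' hE
      have hE2 : ((a + j * q₁ : ℕ) : ZMod q₂) = ((a + j' * q₁ : ℕ) : ZMod q₂) := by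
        have := congrArg (Units.val) hE
        simpa [ZMod.coe_unitOfCoprime] using this
      rw [ZMod.natCast_eq_natCast_iff] at hE2
      exact inj_shift hq₁ (Finset.mem_range.mp (Finset.mem_filter.mp hj).1)
        (Finset.mem_range.mp (Finset.mem_filter.mp hj').1) (hq₂eq ▸ hE2)
    · intro v hv
      simp only [mem_filter, mem_univ, true_and] at hv
      set b := (v : ZMod q₂).val with hbdef
      have hb2 : ((b : ℕ) : ZMod q₂) = (v : ZMod q₂) := ZMod.natCast_rightInverse _
      have hbco : Nat.Coprime b q₂ := ZMod.val_coe_unit_coprime v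
      have hbmod : b % q₁ = a % q₁ := by
        have h1 : ((b : ℕ) : ZMod q₁) = ((a : ℕ) : ZMod q₁) := by
          have h2 := congrArg (Units.val) hv
          rw [hcoe, ZMod.coe_unitOfCoprime] at h2
          rw [← map_natCast (ZMod.castHom hdvd (ZMod q₁)) b, hb2, h2]
        exact (ZMod.natCast_eq_natCast_iff _ _ _).mp h1
      obtain ⟨j, hjn, hjb⟩ := exists_shift hn b hbmod
      rw [← hq₂eq] at hjb
      have hbco' : Nat.Coprime (a + j * q₁) q₂ := by
        have := Nat.ModEq.gcd_eq (show (a + j * q₁) ≡ b [MOD q₂] from hjb)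
        unfold Nat.Coprime
        rw [this]; exact hbco
      refine ⟨j, Finset.mem_filter.mpr ⟨Finset.mem_range.mpr hjn, hbco'⟩, ?_⟩
      apply Units.ext
      rw [ZMod.coe_unitOfCoprime]
      rw [show ((a + j * q₁ : ℕ) : ZMod q₂) = ((b : ℕ) : ZMod q₂) from
        (ZMod.natCast_eq_natCast_iff _ _ _).mpr hjb, hb2]
  rw [step3, fiber_card_eq hdvd, step2]; ring

lemma prod_split {q₁ q₂ a n : ℕ} (hq₁ : 0 < q₁) (hq₂ : 0 < q₂) (hdvd : q₁ ∣ q₂)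
    (hq₂eq : q₂ = n * q₁) (hn : 0 < n) {N : ℕ} (hN : q₂ ≤ N) :
    ∏ p ∈ Finset.filter (fun p => Nat.Prime p ∧ p % q₁ = a % q₁) (Finset.range (N+1)),
        (1 - 1/(p:ℝ))
    = (∏ j ∈ Finset.filter (fun j => Nat.Coprime (a + j * q₁) q₂) (Finset.range n),
        ∏ p ∈ Finset.filter (fun p => Nat.Prime p ∧ p % q₂ = (a + j * q₁) % q₂)
          (Finset.range (N+1)), (1 - 1/(p:ℝ)))
      * ∏ p ∈ Finset.filter (fun p => p % q₁ = a % q₁) q₂.primeFactors, (1 - 1/(p:ℝ)) := by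
  set J := Finset.filter (fun j => Nat.Coprime (a + j * q₁) q₂) (Finset.range n) with hJ
  set B := Finset.filter (fun p => p % q₁ = a % q₁) q₂.primeFactors with hB
  set T := fun j => Finset.filter (fun p => Nat.Prime p ∧ p % q₂ = (a + j * q₁) % q₂)
      (Finset.range (N+1)) with hT
  -- coprimality of members of T j for j ∈ J
  have hTcop : ∀ j ∈ J, ∀ p ∈ T j, Nat.Coprime p q₂ := by
    intro j hj p hp
    rw [hT, Finset.mem_filter] at hp
    have hpe : p ≡ (a + j * q₁) [MOD q₂] := hp.2.2
    have := Nat.ModEq.gcd_eq hpe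
    unfold Nat.Coprime
    rw [this]
    exact (Finset.mem_filter.mp hj).2
  have hUnion : Finset.filter (fun p => Nat.Prime p ∧ p % q₁ = a % q₁) (Finset.range (N+1))
      = (J.biUnion T) ∪ B := by
    ext p
    simp only [Finset.mem_union, Finset.mem_biUnion, Finset.mem_filter, Finset.mem_range,
      Nat.mem_primeFactors, hJ, hT, hB]
    constructor
    · rintro ⟨hpN, hpp, hpm⟩
      by_cases hdq : p ∣ q₂
      · exact Or.inr ⟨⟨hpp, hdq, hq₂.ne'⟩, hpm⟩
      · left
        obtain ⟨j, hjn, hjm⟩ := exists_shift hn p hpm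
        rw [← hq₂eq] at hjm
        refine ⟨j, ⟨hjn, ?_⟩, hpN, hpp, hjm.symm⟩
        unfold Nat.Coprime
        rw [Nat.ModEq.gcd_eq (show (a + j * q₁) ≡ p [MOD q₂] from hjm)]
        exact (Nat.Prime.coprime_iff_not_dvd hpp).mpr hdq
    · rintro (⟨j, ⟨hjn, hjc⟩, hpN, hpp, hpm⟩ | ⟨⟨hpp, hdq, _⟩, hpm⟩)
      · refine ⟨hpN, hpp, ?_⟩
        calc p % q₁ = (p % q₂) % q₁ := (Nat.mod_mod_of_dvd p hdvd).symm
          _ = ((a + j * q₁) % q₂) % q₁ := by rw [hpm]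
          _ = (a + j * q₁) % q₁ := Nat.mod_mod_of_dvd _ hdvd
          _ = a % q₁ := Nat.add_mul_mod_self_right a j q₁
      · exact ⟨Nat.lt_succ_of_le ((Nat.le_of_dvd hq₂ hdq).trans hN), hpp, hpm⟩
  have hdisj : Disjoint (J.biUnion T) B := by
    rw [Finset.disjoint_left]
    intro p hp hpB
    obtain ⟨j, hj, hpT⟩ := Finset.mem_biUnion.mp hp
    have hcop := hTcop j hj p hpT
    rw [hB, Finset.mem_filter, Nat.mem_primeFactors] at hpB
    have h2 : p ∣ Nat.gcd p q₂ := Nat.dvd_gcd dvd_rfl hpB.1.2.1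
    rw [hcop] at h2
    have h3 : p = 1 := Nat.dvd_one.mp h2
    exact absurd h3 (Nat.Prime.one_lt hpB.1.1).ne'
  have hpair : (↑J : Set ℕ).PairwiseDisjoint T := by
    intro i hi j hj hij
    apply Finset.disjoint_left.mpr
    intro p hpi hpj
    rw [hT] at hpi hpj
    simp only [Finset.mem_filter] at hpi hpj
    exact hij (inj_shift hq₁
      (Finset.mem_range.mp (Finset.mem_filter.mp hi).1)
      (Finset.mem_range.mp (Finset.mem_filter.mp hj).1)
      (hq₂eq ▸ (hpi.2.2.symm.trans hpj.2.2)))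
  rw [hUnion, Finset.prod_union hdisj, Finset.prod_biUnion hpair]

open Filter Real in
/-- Let `C q a` be the Mertens constant for the progression `a mod q`, i.e.
`∏_{p ≤ x, p ≡ a mod q} (1 - 1/p) = C(q,a) (log x)^(-1/φ(q)) (1 + o(1))` as `x → ∞`.
If `q₁ ∣ q₂`, `q₁ ≥ 3`, `(a, q₁) = 1` and `n = q₂/q₁`, then
`C(q₁, a) = ∏_{0 ≤ j < n, (a + j q₁, q₂) = 1} C(q₂, a + j q₁) ·
  ∏_{p | q₂, p ≡ a mod q₁} (1 - 1/p)`. -/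
theorem mertens_constant_factorization (C : ℕ → ℕ → ℝ)
    (hC : ∀ q a : ℕ, 3 ≤ q → Nat.Coprime a q →
      Tendsto (fun x : ℝ =>
          (∏ p ∈ Finset.filter (fun p => Nat.Prime p ∧ p % q = a % q)
              (Finset.range (⌊x⌋₊ + 1)), (1 - 1 / (p : ℝ))) *
            Real.log x ^ ((1 : ℝ) / q.totient))
        atTop (nhds (C q a)))
    {q₁ q₂ a n : ℕ} (hq₁ : 3 ≤ q₁) (hq₂ : 0 < q₂) (hdvd : q₁ ∣ q₂) (ha : Nat.Coprime a q₁)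
    (hn : n = q₂ / q₁) :
    C q₁ a = (∏ j ∈ Finset.filter (fun j => Nat.Coprime (a + j * q₁) q₂) (Finset.range n),
        C q₂ (a + j * q₁)) *
      ∏ p ∈ Finset.filter (fun p => p % q₁ = a % q₁) q₂.primeFactors, (1 - 1 / (p : ℝ)) := by
  have hq₁0 : 0 < q₁ := by omega
  have hq₂eq : q₂ = n * q₁ := by rw [hn, Nat.div_mul_cancel hdvd]
  have hn0 : 0 < n := by
    rw [hn]
    exact Nat.div_pos (Nat.le_of_dvd hq₂ hdvd) hq₁0
  have hq₂3 : 3 ≤ q₂ := hq₁.trans (Nat.le_of_dvd hq₂ hdvd)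
  set J := Finset.filter (fun j => Nat.Coprime (a + j * q₁) q₂) (Finset.range n) with hJ
  set K := ∏ p ∈ Finset.filter (fun p => p % q₁ = a % q₁) q₂.primeFactors, (1 - 1 / (p : ℝ))
    with hK
  have hm : J.card * q₁.totient = q₂.totient := card_J hq₁0 hq₂ hdvd ha hq₂eq hn0
  have hφ₁ : 0 < q₁.totient := Nat.totient_pos.mpr hq₁0
  have hφ₂ : 0 < q₂.totient := Nat.totient_pos.mpr hq₂
  -- tendsto of the product form
  have hG : Tendsto (fun x : ℝ =>
      (∏ j ∈ J, ((∏ p ∈ Finset.filter (fun p => Nat.Prime p ∧ p % q₂ = (a + j * q₁) % q₂)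
          (Finset.range (⌊x⌋₊ + 1)), (1 - 1 / (p : ℝ))) *
        Real.log x ^ ((1 : ℝ) / q₂.totient))) * K)
      atTop (nhds ((∏ j ∈ J, C q₂ (a + j * q₁)) * K)) := by
    apply Tendsto.mul_const
    exact tendsto_finset_prod J (fun j hj => hC q₂ (a + j * q₁) hq₂3
      (Finset.mem_filter.mp hj).2)
  -- eventual equality
  have hEq : (fun x : ℝ =>
      (∏ j ∈ J, ((∏ p ∈ Finset.filter (fun p => Nat.Prime p ∧ p % q₂ = (a + j * q₁) % q₂)
          (Finset.range (⌊x⌋₊ + 1)), (1 - 1 / (p : ℝ))) *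
        Real.log x ^ ((1 : ℝ) / q₂.totient))) * K) =ᶠ[atTop] (fun x : ℝ =>
      (∏ p ∈ Finset.filter (fun p => Nat.Prime p ∧ p % q₁ = a % q₁)
          (Finset.range (⌊x⌋₊ + 1)), (1 - 1 / (p : ℝ))) *
        Real.log x ^ ((1 : ℝ) / q₁.totient)) := by
    filter_upwards [eventually_ge_atTop ((q₂ : ℝ))] with x hx
    have hxN : q₂ ≤ ⌊x⌋₊ := Nat.le_floor hx
    have hx1 : 1 < x := by
      have h3 : (3:ℝ) ≤ (q₂:ℝ) := by exact_mod_cast hq₂3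
      linarith
    have hL : 0 < Real.log x := Real.log_pos hx1
    rw [prod_split (a := a) hq₁0 hq₂ hdvd hq₂eq hn0 hxN]
    rw [Finset.prod_mul_distrib, Finset.prod_const]
    have hpow : (Real.log x ^ ((1 : ℝ) / q₂.totient)) ^ (J.card : ℕ)
        = Real.log x ^ ((1 : ℝ) / q₁.totient) := by
      rw [← Real.rpow_natCast (Real.log x ^ ((1 : ℝ) / q₂.totient)) J.card,
        ← Real.rpow_mul hL.le]
      congr 1
      have h1 : (q₁.totient : ℝ) ≠ 0 := by positivity
      have h2 : (q₂.totient : ℝ) ≠ 0 := by positivity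
      field_simp
      exact_mod_cast hm
    rw [hpow]
    ring
  exact tendsto_nhds_unique (hC q₁ a hq₁ ha) (hG.congr' hEq)
end

section
/- Let q ≥ 3, (a,q) = 1, A > 0 with Aq ≥ 2, and K ≥ 2 an integer. Define E₁ = ∑_{χ mod q, χ ≠ χ₀} χ̄(a) ∑_{1 ≤ m ≤ M} (1/m) ∑_{k > K} (μ(k)/k) log L_{Aq}(χ^k, km) for any M ≥ 1, where L_{Aq}(ψ,s) = ∏_{p > Aq}(1 - ψ(p)p^{-s})^{-1}. Then |E₁| ≤ (φ(q) - 1) · Aq / (K (Aq - 1) ((Aq)^K - 1)). -/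
lemma trunc_step (d : ℕ) {y : ℝ} (hy : 1 ≤ y) :
    ((d : ℝ) + 1) * ((y + 1) ^ (d + 2))⁻¹ ≤ (y ^ (d + 1))⁻¹ - ((y + 1) ^ (d + 1))⁻¹ := by
  have hy0 : 0 < y := lt_of_lt_of_le one_pos hy
  have h1 : (0:ℝ) < y + 1 := by linarith
  have ha : (0:ℝ) < y ^ (d + 1) := pow_pos hy0 _
  have hb : (0:ℝ) < (y + 1) ^ (d + 1) := pow_pos h1 _
  have hd : (0:ℝ) < y ^ d := pow_pos hy0 _
  have key : y ^ (d + 1) + ((d : ℝ) + 1) * y ^ d ≤ (y + 1) ^ (d + 1) := by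
    have hinv : (0:ℝ) ≤ y⁻¹ := by positivity
    have h := one_add_mul_le_pow (a := y⁻¹) (by linarith) (d + 1)
    have e : (1 + y⁻¹) ^ (d + 1) * y ^ (d + 1) = (y + 1) ^ (d + 1) := by
      rw [← mul_pow]; field_simp
    have h2 : (1 + ((d : ℝ) + 1) * y⁻¹) * y ^ (d + 1) ≤ (1 + y⁻¹) ^ (d + 1) * y ^ (d + 1) := by
      refine mul_le_mul_of_nonneg_right ?_ ha.le
      exact_mod_cast h
    calc y ^ (d + 1) + ((d : ℝ) + 1) * y ^ d
        = (1 + ((d : ℝ) + 1) * y⁻¹) * y ^ (d + 1) := by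
          field_simp; ring
      _ ≤ (1 + y⁻¹) ^ (d + 1) * y ^ (d + 1) := h2
      _ = (y + 1) ^ (d + 1) := e
  have step1 : ((y + 1) ^ (d + 2))⁻¹ ≤ y ^ d * (y ^ (d + 1) * (y + 1) ^ (d + 1))⁻¹ := by
    rw [← div_eq_mul_inv, le_div_iff₀ (by positivity), inv_mul_eq_div, div_le_iff₀ (by positivity)]
    have : y ^ (d + 1) * (y + 1) ^ (d + 1) = (y ^ d * (y + 1) ^ (d + 1)) * y := by ring
    rw [this]
    have : y ^ d * (y + 1) ^ (d + 2) = (y ^ d * (y + 1) ^ (d + 1)) * (y + 1) := by ring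
    rw [this]
    have hpos : (0:ℝ) < y ^ d * (y + 1) ^ (d + 1) := by positivity
    nlinarith
  calc ((d : ℝ) + 1) * ((y + 1) ^ (d + 2))⁻¹
      ≤ ((d : ℝ) + 1) * (y ^ d * (y ^ (d + 1) * (y + 1) ^ (d + 1))⁻¹) := by
        refine mul_le_mul_of_nonneg_left step1 (by positivity)
    _ = ((d : ℝ) + 1) * y ^ d * (y ^ (d + 1) * (y + 1) ^ (d + 1))⁻¹ := by ring
    _ ≤ ((y + 1) ^ (d + 1) - y ^ (d + 1)) * (y ^ (d + 1) * (y + 1) ^ (d + 1))⁻¹ :=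
        mul_le_mul_of_nonneg_right (by linarith) (by positivity)
    _ = (y ^ (d + 1))⁻¹ - ((y + 1) ^ (d + 1))⁻¹ := by
        field_simp


lemma zeta_partial {N n : ℕ} (hN : 3 ≤ N) (hn : 3 ≤ n) (I : ℕ) :
    ∑ i ∈ Finset.range I, (((N + i : ℕ) : ℝ) ^ n)⁻¹
      ≤ ((N : ℝ) ^ n)⁻¹ * (1 + (N : ℝ) / ((n : ℝ) - 1)) := by
  have hN0 : (0:ℝ) < (N : ℝ) := by
    have : (3:ℝ) ≤ (N:ℝ) := by exact_mod_cast hN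
    linarith
  have hn3 : (3:ℝ) ≤ (n:ℝ) := by exact_mod_cast hn
  have hpos : (0:ℝ) < (n:ℝ) - 1 := by linarith
  set b : ℕ → ℝ := fun i => (((N + i : ℕ) : ℝ) ^ (n - 1))⁻¹ with hb
  have hcastd : ((n - 2 : ℕ) : ℝ) + 1 = (n : ℝ) - 1 := by
    have h2 : (2:ℕ) ≤ n := by omega
    push_cast [Nat.cast_sub h2]
    ring
  have hterm : ∀ i : ℕ, (((N + (i + 1) : ℕ) : ℝ) ^ n)⁻¹
      ≤ ((n : ℝ) - 1)⁻¹ * (b i - b (i + 1)) := by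
    intro i
    have hy : (1:ℝ) ≤ ((N + i : ℕ) : ℝ) := by exact_mod_cast (by omega : 1 ≤ N + i)
    have h := trunc_step (n - 2) hy
    rw [(by omega : n - 2 + 2 = n), (by omega : n - 2 + 1 = n - 1), hcastd,
      (by push_cast; ring : ((N + i : ℕ) : ℝ) + 1 = ((N + (i + 1) : ℕ) : ℝ))] at h
    calc (((N + (i + 1) : ℕ) : ℝ) ^ n)⁻¹
        = ((n : ℝ) - 1)⁻¹ * (((n : ℝ) - 1) * (((N + (i + 1) : ℕ) : ℝ) ^ n)⁻¹) := by
          field_simp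
      _ ≤ ((n : ℝ) - 1)⁻¹ * (b i - b (i + 1)) :=
          mul_le_mul_of_nonneg_left h (inv_nonneg.2 hpos.le)
  cases I with
  | zero => simp; positivity
  | succ J =>
    rw [Finset.sum_range_succ']
    have h1 : ∑ i ∈ Finset.range J, (((N + (i + 1) : ℕ) : ℝ) ^ n)⁻¹
        ≤ ((n : ℝ) - 1)⁻¹ * (b 0 - b J) := by
      calc ∑ i ∈ Finset.range J, (((N + (i + 1) : ℕ) : ℝ) ^ n)⁻¹
          ≤ ∑ i ∈ Finset.range J, ((n : ℝ) - 1)⁻¹ * (b i - b (i + 1)) :=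
            Finset.sum_le_sum fun i _ => hterm i
        _ = ((n : ℝ) - 1)⁻¹ * ∑ i ∈ Finset.range J, (b i - b (i + 1)) := by
            rw [← Finset.mul_sum]
        _ = ((n : ℝ) - 1)⁻¹ * (b 0 - b J) := by rw [Finset.sum_range_sub']
    have hb0 : b 0 = (N : ℝ) * ((N : ℝ) ^ n)⁻¹ := by
      show (((N + 0 : ℕ) : ℝ) ^ (n - 1))⁻¹ = _
      rw [Nat.add_zero]
      have hpow : (N : ℝ) ^ n = (N : ℝ) ^ (n - 1) * N := by
        rw [← pow_succ]
        congr 1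
        omega
      rw [hpow]
      field_simp
    have hbJ : (0:ℝ) ≤ b J := by positivity
    have hf0 : (((N + 0 : ℕ) : ℝ) ^ n)⁻¹ = ((N : ℝ) ^ n)⁻¹ := by rw [Nat.add_zero]
    rw [hf0]
    have hrhs : ((N : ℝ) ^ n)⁻¹ * (1 + (N : ℝ) / ((n : ℝ) - 1))
        = ((n : ℝ) - 1)⁻¹ * ((N : ℝ) * ((N : ℝ) ^ n)⁻¹) + ((N : ℝ) ^ n)⁻¹ := by
      rw [div_eq_mul_inv]; ring
    rw [hrhs]
    have h2 : ((n : ℝ) - 1)⁻¹ * (b 0 - b J) ≤ ((n : ℝ) - 1)⁻¹ * b 0 :=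
      mul_le_mul_of_nonneg_left (sub_le_self _ hbJ) (inv_nonneg.2 hpos.le)
    rw [hb0] at h1 h2
    linarith [h1, h2]

lemma zeta_summable {N n : ℕ} (hN : 3 ≤ N) (hn : 3 ≤ n) :
    Summable (fun i : ℕ => (((N + i : ℕ) : ℝ) ^ n)⁻¹) :=
  summable_of_sum_range_le (fun i => by positivity) (zeta_partial hN hn)

lemma zeta_tsum_le {N n : ℕ} (hN : 3 ≤ N) (hn : 3 ≤ n) :
    ∑' i : ℕ, (((N + i : ℕ) : ℝ) ^ n)⁻¹
      ≤ ((N : ℝ) ^ n)⁻¹ * (1 + (N : ℝ) / ((n : ℝ) - 1)) :=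
  Real.tsum_le_of_sum_range_le (fun i => by positivity) (zeta_partial hN hn)


lemma logL_norm_bound {q : ℕ} [NeZero q] {x : ℝ} (hx : 2 ≤ x)
    (ψ : DirichletCharacter ℂ q) {n : ℕ} (hn : 3 ≤ n) :
    ‖∑' (p : {p : ℕ // p.Prime ∧ x < (p : ℝ)}) (j : ℕ+),
        ψ ((p : ℕ) : ZMod q) ^ (j : ℕ) / ((j : ℕ) * ((p : ℕ) : ℂ) ^ ((j : ℕ) * n))‖
      ≤ 27 / 26 * ((((⌊x⌋₊ + 1 : ℕ) : ℝ) ^ n)⁻¹ *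
          (1 + ((⌊x⌋₊ + 1 : ℕ) : ℝ) / ((n : ℝ) - 1))) := by
  have hx0 : (0:ℝ) ≤ x := by linarith
  set N : ℕ := ⌊x⌋₊ + 1 with hNdef
  have hN3 : 3 ≤ N := by
    have : 2 ≤ ⌊x⌋₊ := Nat.le_floor (by exact_mod_cast hx)
    omega
  -- per-prime bound
  set S := {p : ℕ // p.Prime ∧ x < (p : ℝ)} with hS
  set F : S → ℂ := fun p => ∑' (j : ℕ+),
      ψ ((p : ℕ) : ZMod q) ^ (j : ℕ) / ((j : ℕ) * ((p : ℕ) : ℂ) ^ ((j : ℕ) * n)) with hF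
  have hpN : ∀ p : S, N ≤ (p : ℕ) := fun p => (Nat.floor_lt hx0).mpr p.2.2
  have key : ∀ p : S, ‖F p‖ ≤ 27 / 26 * ((((p : ℕ) : ℝ) ^ n)⁻¹) := by
    intro p
    have hp3 : (3:ℝ) ≤ ((p : ℕ) : ℝ) := by
      exact_mod_cast le_trans hN3 (hpN p)
    have hp0 : (0:ℝ) < ((p : ℕ) : ℝ) := by linarith
    set r : ℝ := ((((p : ℕ) : ℝ)) ^ n)⁻¹ with hr
    have h27 : (27:ℝ) ≤ ((p : ℕ) : ℝ) ^ n := by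
      calc (27:ℝ) = 3 ^ 3 := by norm_num
        _ ≤ 3 ^ n := pow_le_pow_right₀ (by norm_num) hn
        _ ≤ ((p : ℕ) : ℝ) ^ n := pow_le_pow_left₀ (by norm_num) hp3 n
    have hr0 : 0 ≤ r := by positivity
    have hr27 : r ≤ 1 / 27 := by
      rw [hr]
      rw [inv_le_comm₀ (by linarith) (by norm_num)]
      · linarith
    have hr1 : r < 1 := lt_of_le_of_lt hr27 (by norm_num)
    -- termwise bound
    have hterm : ∀ j : ℕ+, ‖ψ ((p : ℕ) : ZMod q) ^ (j : ℕ) /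
        ((j : ℕ) * ((p : ℕ) : ℂ) ^ ((j : ℕ) * n))‖ ≤ r ^ (j : ℕ) := by
      intro j
      rw [norm_div, norm_mul, norm_pow, norm_pow, Complex.norm_natCast, Complex.norm_natCast]
      have hnum : ‖ψ ((p : ℕ) : ZMod q)‖ ^ (j : ℕ) ≤ 1 :=
        pow_le_one₀ (norm_nonneg _) (DirichletCharacter.norm_le_one ψ _)
      have hj1 : (1:ℝ) ≤ ((j : ℕ) : ℝ) := by exact_mod_cast j.one_le
      have hden : (((p : ℕ) : ℝ)) ^ ((j : ℕ) * n) ≤ ((j : ℕ) : ℝ) * ((p : ℕ) : ℝ) ^ ((j : ℕ) * n) := by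
        nlinarith [pow_pos hp0 ((j : ℕ) * n)]
      have hdpos : (0:ℝ) < ((p : ℕ) : ℝ) ^ ((j : ℕ) * n) := pow_pos hp0 _
      calc ‖ψ ((p : ℕ) : ZMod q)‖ ^ (j : ℕ) / (((j : ℕ) : ℝ) * ((p : ℕ) : ℝ) ^ ((j : ℕ) * n))
          ≤ 1 / (((p : ℕ) : ℝ) ^ ((j : ℕ) * n)) := by
            apply div_le_div₀ (by norm_num) hnum hdpos hden
        _ = r ^ (j : ℕ) := by
            rw [hr, one_div, ← inv_pow, ← inv_pow, ← pow_mul, mul_comm ((j:ℕ)) n]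
    -- summability of norms over j
    have hgeoPNat : Summable (fun j : ℕ+ => r ^ (j : ℕ)) :=
      (summable_geometric_of_lt_one hr0 hr1).comp_injective PNat.coe_injective
    have hsumnorm : Summable (fun j : ℕ+ => ‖ψ ((p : ℕ) : ZMod q) ^ (j : ℕ) /
        ((j : ℕ) * ((p : ℕ) : ℂ) ^ ((j : ℕ) * n))‖) :=
      Summable.of_nonneg_of_le (fun j => norm_nonneg _) hterm hgeoPNat
    have htsumval : ∑' j : ℕ+, r ^ (j : ℕ) = r * (1 - r)⁻¹ := by
      rw [← Equiv.pnatEquivNat.symm.tsum_eq (fun j : ℕ+ => r ^ (j : ℕ))]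
      simp only [Equiv.pnatEquivNat_symm_apply, Nat.succPNat_coe, Nat.succ_eq_add_one]
      have : ∀ i : ℕ, r ^ (i + 1) = r * r ^ i := fun i => by ring
      calc ∑' i : ℕ, r ^ (i + 1) = ∑' i : ℕ, r * r ^ i := by simp only [this]
        _ = r * ∑' i : ℕ, r ^ i := tsum_mul_left
        _ = r * (1 - r)⁻¹ := by rw [tsum_geometric_of_lt_one hr0 hr1]
    have hbound : ‖F p‖ ≤ r * (1 - r)⁻¹ := by
      rw [hF]
      refine le_trans (norm_tsum_le_tsum_norm hsumnorm) ?_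
      rw [← htsumval]
      exact Summable.tsum_le_tsum hterm hsumnorm hgeoPNat
    refine hbound.trans ?_
    have h1r : (26:ℝ)/27 ≤ 1 - r := by linarith
    have : (1 - r)⁻¹ ≤ 27/26 := by
      rw [inv_le_comm₀ (by linarith) (by norm_num)]
      linarith
    calc r * (1 - r)⁻¹ ≤ r * (27/26) := mul_le_mul_of_nonneg_left this hr0
      _ = 27 / 26 * r := by ring
  -- sum over primes
  set g : ℕ → ℝ := fun i => 27 / 26 * (((N + i : ℕ) : ℝ) ^ n)⁻¹ with hg
  have hgsum : Summable g := (zeta_summable hN3 hn).mul_left _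
  set ι : S → ℕ := fun p => (p : ℕ) - N with hι
  have hι_inj : Function.Injective ι := by
    intro p₁ p₂ h
    have h1 := hpN p₁
    have h2 := hpN p₂
    apply Subtype.ext
    simp only [hι] at h
    omega
  have hgι : ∀ p : S, g (ι p) = 27 / 26 * ((((p : ℕ) : ℝ)) ^ n)⁻¹ := by
    intro p
    have := hpN p
    simp only [hg, hι]
    rw [(by omega : N + ((p : ℕ) - N) = (p : ℕ))]
  have hFsum : Summable (fun p : S => ‖F p‖) :=
    Summable.of_nonneg_of_le (fun p => norm_nonneg _)
      (fun p => (key p).trans_eq (hgι p).symm) (hgsum.comp_injective hι_inj)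
  calc ‖∑' p : S, F p‖ ≤ ∑' p : S, ‖F p‖ := norm_tsum_le_tsum_norm hFsum
    _ ≤ ∑' p : S, g (ι p) := Summable.tsum_le_tsum (fun p => (key p).trans_eq (hgι p).symm)
        hFsum (hgsum.comp_injective hι_inj)
    _ ≤ ∑' i : ℕ, g i := tsum_comp_le_tsum_of_inj hgsum
        (fun i => by positivity) hι_inj
    _ = 27 / 26 * ∑' i : ℕ, (((N + i : ℕ) : ℝ) ^ n)⁻¹ := tsum_mul_left
    _ ≤ 27 / 26 * (((N : ℝ) ^ n)⁻¹ * (1 + (N : ℝ) / ((n : ℝ) - 1))) := by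
        have := zeta_tsum_le hN3 hn
        nlinarith [this]

set_option maxHeartbeats 2000000 in
open ArithmeticFunction in
/-- Tail estimate for the truncation in `k`: with `logL ψ n` the convergent series for
`log L_{Aq}(ψ, n)` (Euler product over primes `p > Aq`), the error term
`E₁ = ∑_{χ ≠ χ₀} χ̄(a) ∑_{1 ≤ m ≤ M} (1/m) ∑_{k > K} (μ(k)/k) logL(χ^k, km)` satisfies
`|E₁| ≤ (φ(q) - 1) Aq / (K (Aq - 1) ((Aq)^K - 1))`. -/
theorem truncation_error_bound {q : ℕ} (hq : 3 ≤ q) [NeZero q] {a : ℕ}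
    (ha : Nat.Coprime a q) {A : ℝ} (hA : 0 < A) (hAq : 2 ≤ A * q)
    {K M : ℕ} (hK : 2 ≤ K) (hM : 1 ≤ M)
    (logL : DirichletCharacter ℂ q → ℕ → ℂ)
    (hlogL : ∀ (ψ : DirichletCharacter ℂ q) (n : ℕ), logL ψ n =
      ∑' (p : {p : ℕ // p.Prime ∧ A * q < (p : ℝ)}) (j : ℕ+),
        ψ ((p : ℕ) : ZMod q) ^ (j : ℕ) / ((j : ℕ) * ((p : ℕ) : ℂ) ^ ((j : ℕ) * n))) :
    ‖∑' χ : {χ : DirichletCharacter ℂ q // χ ≠ 1},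
        (starRingEnd ℂ) ((χ : DirichletCharacter ℂ q) ((a : ℕ) : ZMod q)) *
          ∑ m ∈ Finset.Icc 1 M, (1 / (m : ℂ)) *
            ∑' k : {k : ℕ // K < k},
              ((moebius (k : ℕ) : ℤ) : ℂ) / ((k : ℕ) : ℂ) *
                logL ((χ : DirichletCharacter ℂ q) ^ (k : ℕ)) ((k : ℕ) * m)‖
      ≤ ((q.totient : ℝ) - 1) * (A * q) / (K * (A * q - 1) * ((A * q) ^ K - 1)) := by
  classical
  set x : ℝ := A * q with hxdef
  have hx0 : (0:ℝ) ≤ x := by linarith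
  set N : ℕ := ⌊x⌋₊ + 1 with hNdef
  have hN3 : 3 ≤ N := by
    have : 2 ≤ ⌊x⌋₊ := Nat.le_floor (by exact_mod_cast hAq)
    omega
  have hNR : (3:ℝ) ≤ (N:ℝ) := by exact_mod_cast hN3
  have hxN : x < (N:ℝ) := by
    have := Nat.lt_floor_add_one x
    rw [hNdef]
    push_cast
    convert this using 2
  have hNx : (N:ℝ) ≤ x + 1 := by
    have := Nat.floor_le hx0
    rw [hNdef]
    push_cast
    linarith
  have hKR : (2:ℝ) ≤ (K:ℝ) := by exact_mod_cast hK
  have hK0 : (0:ℝ) < (K:ℝ) := by linarith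
  set τ : ℝ := (((N:ℝ)) ^ K)⁻¹ with hτ
  have hNK3 : (3:ℝ) ≤ (N:ℝ) ^ K := le_trans hNR (le_self_pow₀ (by linarith) (by omega))
  have hτ0 : 0 ≤ τ := by positivity
  have hτ1 : τ < 1 := by
    rw [hτ, inv_lt_one_iff₀]
    right; linarith
  set E : ℝ := 27 / 26 * ((K:ℝ) + 1)⁻¹ * (1 + (N:ℝ) / (K:ℝ)) * ((N:ℝ) - 1)⁻¹ with hE
  have hE0 : 0 ≤ E := by
    apply mul_nonneg (by positivity)
    rw [inv_nonneg]; linarith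
  -- per (χ, m) bound on the k-sum
  have hk_sum : ∀ (χ : DirichletCharacter ℂ q) (m : ℕ), 1 ≤ m →
      ‖∑' k : {k : ℕ // K < k},
          ((moebius (k : ℕ) : ℤ) : ℂ) / ((k : ℕ) : ℂ) * logL (χ ^ (k : ℕ)) ((k : ℕ) * m)‖
        ≤ 27 / 26 * ((K:ℝ) + 1)⁻¹ * (1 + (N:ℝ) / ((K:ℝ) * m)) * ((N:ℝ) - 1)⁻¹ * τ ^ m := by
    intro χ m hm
    have hmR : (1:ℝ) ≤ (m:ℝ) := by exact_mod_cast hm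
    set ρ : ℝ := (((N:ℝ)) ^ m)⁻¹ with hρ
    have hNm3 : (3:ℝ) ≤ (N:ℝ) ^ m := le_trans hNR (le_self_pow₀ (by linarith) (by omega))
    have hρ0 : 0 ≤ ρ := by positivity
    have hρ1 : ρ < 1 := by rw [hρ, inv_lt_one_iff₀]; right; linarith
    set D : ℝ := 27 / 26 * ((K:ℝ) + 1)⁻¹ * (1 + (N:ℝ) / ((K:ℝ) * m)) with hD
    have hD0 : 0 ≤ D := by positivity
    set t : {k : ℕ // K < k} → ℂ := fun k =>
      ((moebius (k : ℕ) : ℤ) : ℂ) / ((k : ℕ) : ℂ) * logL (χ ^ (k : ℕ)) ((k : ℕ) * m) with ht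
    have hterm : ∀ k : {k : ℕ // K < k}, ‖t k‖ ≤ D * ρ ^ (k : ℕ) := by
      rintro ⟨k, hk⟩
      have hkm3 : 3 ≤ k * m := le_trans (by omega) (Nat.le_mul_of_pos_right k (by omega))
      rw [ht]
      simp only
      rw [norm_mul]
      have h1 : ‖((moebius k : ℤ) : ℂ) / ((k : ℕ) : ℂ)‖ ≤ ((K:ℝ) + 1)⁻¹ := by
        rw [norm_div, Complex.norm_intCast, Complex.norm_natCast]
        have habs : |((moebius k : ℤ) : ℝ)| ≤ 1 := by
          exact_mod_cast ArithmeticFunction.abs_moebius_le_one (n := k)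
        have hkK : (K:ℝ) + 1 ≤ (k:ℝ) := by exact_mod_cast hk
        rw [← one_div]
        exact div_le_div₀ (by norm_num) habs (by linarith) hkK
      have h2 : ‖logL (χ ^ k) (k * m)‖
          ≤ 27 / 26 * (((N:ℝ) ^ (k * m))⁻¹ * (1 + (N:ℝ) / ((K:ℝ) * m))) := by
        rw [hlogL]
        refine le_trans (logL_norm_bound hAq (χ ^ k) hkm3) ?_
        rw [← hNdef]
        have hkmR : (K:ℝ) * m ≤ ((k * m : ℕ) : ℝ) - 1 := by
          have h1 : (K + 1) * m ≤ k * m := Nat.mul_le_mul_right m (by omega)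
          have h2 : K * m + 1 ≤ k * m := by
            have : K * m + m = (K + 1) * m := by ring
            omega
          have : ((K * m + 1 : ℕ) : ℝ) ≤ ((k * m : ℕ) : ℝ) := by exact_mod_cast h2
          push_cast at this ⊢
          linarith
        have hKm0 : (0:ℝ) < (K:ℝ) * m := by positivity
        refine mul_le_mul_of_nonneg_left ?_ (by norm_num)
        refine mul_le_mul_of_nonneg_left ?_ (by positivity)
        have hdd : (N:ℝ) / (((k * m : ℕ) : ℝ) - 1) ≤ (N:ℝ) / ((K:ℝ) * m) :=
          div_le_div_of_nonneg_left (by positivity) hKm0 hkmR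
        linarith
      calc ‖((moebius k : ℤ) : ℂ) / ((k : ℕ) : ℂ)‖ * ‖logL (χ ^ k) (k * m)‖
          ≤ ((K:ℝ) + 1)⁻¹ * (27 / 26 * (((N:ℝ) ^ (k * m))⁻¹ * (1 + (N:ℝ) / ((K:ℝ) * m)))) :=
            mul_le_mul h1 h2 (norm_nonneg _) (by positivity)
        _ = D * ρ ^ k := by
            rw [hD, hρ, inv_pow, ← pow_mul, mul_comm m k]
            ring
    have hmaj : Summable (fun k : {k : ℕ // K < k} => D * ρ ^ (k : ℕ)) :=
      (((summable_geometric_of_lt_one hρ0 hρ1).mul_left D).comp_injective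
        Subtype.val_injective : _)
    have hsumnorm : Summable (fun k : {k : ℕ // K < k} => ‖t k‖) :=
      Summable.of_nonneg_of_le (fun k => norm_nonneg _) hterm hmaj
    have hgeosub : Summable (fun k : {k : ℕ // K < k} => ρ ^ (k : ℕ)) :=
      ((summable_geometric_of_lt_one hρ0 hρ1).comp_injective Subtype.val_injective : _)
    let e : ℕ ≃ {k : ℕ // K < k} :=
      { toFun := fun i => ⟨i + (K + 1), by omega⟩
        invFun := fun k => (k : ℕ) - (K + 1)
        left_inv := fun i => by simp
        right_inv := fun k => Subtype.ext (by have := k.2; simp; omega) }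
    have hgeoval : ∑' k : {k : ℕ // K < k}, ρ ^ (k : ℕ) = ρ ^ (K + 1) * (1 - ρ)⁻¹ := by
      rw [← e.tsum_eq (fun k : {k : ℕ // K < k} => ρ ^ (k : ℕ))]
      have hfe : (fun i : ℕ => ρ ^ ((e i : {k : ℕ // K < k}) : ℕ)) = fun i : ℕ => ρ ^ (i + (K + 1)) :=
        funext fun i => rfl
      rw [hfe]
      calc ∑' i : ℕ, ρ ^ (i + (K + 1)) = ∑' i : ℕ, ρ ^ i * ρ ^ (K + 1) := by
            congr 1; funext i; rw [pow_add]
        _ = (∑' i : ℕ, ρ ^ i) * ρ ^ (K + 1) := tsum_mul_right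
        _ = ρ ^ (K + 1) * (1 - ρ)⁻¹ := by
            rw [tsum_geometric_of_lt_one hρ0 hρ1]; ring
    have halg : ρ ^ (K + 1) * (1 - ρ)⁻¹ ≤ τ ^ m * ((N:ℝ) - 1)⁻¹ := by
      have hu0 : (0:ℝ) < (N:ℝ) ^ m := by positivity
      have h1 : ρ ^ (K + 1) = τ ^ m * (((N:ℝ) ^ m)⁻¹) := by
        rw [hρ, hτ, inv_pow, inv_pow, ← pow_mul, ← pow_mul, ← mul_inv, ← pow_add]
        congr 2
        ring
      have h2 : (1 - ρ)⁻¹ = (N:ℝ) ^ m * ((N:ℝ) ^ m - 1)⁻¹ := by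
        rw [hρ]
        have : 1 - ((N:ℝ) ^ m)⁻¹ = ((N:ℝ) ^ m - 1) / (N:ℝ) ^ m := by
          field_simp
        rw [this, inv_div]
        ring
      rw [h1, h2]
      have heq : τ ^ m * (((N:ℝ) ^ m)⁻¹) * ((N:ℝ) ^ m * ((N:ℝ) ^ m - 1)⁻¹)
          = τ ^ m * ((N:ℝ) ^ m - 1)⁻¹ := by
        field_simp
      rw [heq]
      refine mul_le_mul_of_nonneg_left ?_ (pow_nonneg hτ0 m)
      refine inv_anti₀ (by linarith) ?_
      have hle : (N:ℝ) ≤ (N:ℝ) ^ m := le_self_pow₀ (by linarith) (by omega)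
      linarith
    calc ‖∑' k : {k : ℕ // K < k}, t k‖ ≤ ∑' k : {k : ℕ // K < k}, ‖t k‖ :=
          norm_tsum_le_tsum_norm hsumnorm
      _ ≤ ∑' k : {k : ℕ // K < k}, D * ρ ^ (k : ℕ) := Summable.tsum_le_tsum hterm hsumnorm hmaj
      _ = D * ∑' k : {k : ℕ // K < k}, ρ ^ (k : ℕ) := tsum_mul_left
      _ = D * (ρ ^ (K + 1) * (1 - ρ)⁻¹) := by rw [hgeoval]
      _ ≤ D * (τ ^ m * ((N:ℝ) - 1)⁻¹) := mul_le_mul_of_nonneg_left halg hD0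
      _ = 27 / 26 * ((K:ℝ) + 1)⁻¹ * (1 + (N:ℝ) / ((K:ℝ) * m)) * ((N:ℝ) - 1)⁻¹ * τ ^ m := by
          rw [hD]; ring
  -- geometric sum over m
  have hgeoM : ∑ m ∈ Finset.Icc 1 M, τ ^ m ≤ ((N:ℝ) ^ K - 1)⁻¹ := by
    have hpow1 : (fun i : ℕ => τ ^ (1 + i)) = fun i : ℕ => τ * τ ^ i := by
      funext i; rw [pow_add, pow_one]
    have hsumshift : Summable (fun i : ℕ => τ ^ (1 + i)) := by
      rw [hpow1]
      exact (summable_geometric_of_lt_one hτ0 hτ1).mul_left τ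
    have h1 : ∑ m ∈ Finset.Icc 1 M, τ ^ m = ∑ i ∈ Finset.range M, τ ^ (1 + i) := by
      rw [← Finset.Ico_add_one_right_eq_Icc, Finset.sum_Ico_eq_sum_range]
      congr 1
    have h2 : ∑ i ∈ Finset.range M, τ ^ (1 + i) ≤ ∑' i : ℕ, τ ^ (1 + i) :=
      Summable.sum_le_tsum _ (fun i _ => by positivity) hsumshift
    have h3 : ∑' i : ℕ, τ ^ (1 + i) = τ * (1 - τ)⁻¹ := by
      rw [hpow1, tsum_mul_left, tsum_geometric_of_lt_one hτ0 hτ1]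
    have h4 : τ * (1 - τ)⁻¹ = ((N:ℝ) ^ K - 1)⁻¹ := by
      rw [hτ]
      have hNK0 : (0:ℝ) < (N:ℝ) ^ K := by positivity
      have hh : 1 - ((N:ℝ) ^ K)⁻¹ = ((N:ℝ) ^ K - 1) / (N:ℝ) ^ K := by field_simp
      rw [hh, inv_div]
      field_simp
    rw [h1]
    linarith
  -- per-character bound
  have hper : ∀ χ : DirichletCharacter ℂ q,
      ‖∑ m ∈ Finset.Icc 1 M, (1 / (m : ℂ)) * ∑' k : {k : ℕ // K < k},
          ((moebius (k : ℕ) : ℤ) : ℂ) / ((k : ℕ) : ℂ) * logL (χ ^ (k : ℕ)) ((k : ℕ) * m)‖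
        ≤ E * ((N:ℝ) ^ K - 1)⁻¹ := by
    intro χ
    have hterm_m : ∀ m ∈ Finset.Icc 1 M,
        ‖(1 / (m : ℂ)) * ∑' k : {k : ℕ // K < k},
            ((moebius (k : ℕ) : ℤ) : ℂ) / ((k : ℕ) : ℂ) * logL (χ ^ (k : ℕ)) ((k : ℕ) * m)‖
          ≤ E * τ ^ m := by
      intro m hm
      have hm1 : 1 ≤ m := (Finset.mem_Icc.mp hm).1
      have hmR : (1:ℝ) ≤ (m:ℝ) := by exact_mod_cast hm1
      have hm0 : (0:ℝ) < (m:ℝ) := by linarith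
      rw [norm_mul, norm_div, norm_one, Complex.norm_natCast]
      refine le_trans (mul_le_mul_of_nonneg_left (hk_sum χ m hm1) (by positivity)) ?_
      have hfrac : 1 / (m:ℝ) * (1 + (N:ℝ) / ((K:ℝ) * m)) ≤ 1 + (N:ℝ) / (K:ℝ) := by
        have t1 : 1 / (m:ℝ) ≤ 1 := by rw [div_le_one hm0]; exact hmR
        have t2 : (N:ℝ) / ((K:ℝ) * m * m) ≤ (N:ℝ) / (K:ℝ) := by
          have hmm : (1:ℝ) ≤ (m:ℝ) * m := by nlinarith
          refine div_le_div_of_nonneg_left (by positivity) hK0 ?_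
          nlinarith [mul_le_mul_of_nonneg_left hmm hK0.le]
        have e1 : 1 / (m:ℝ) * (1 + (N:ℝ) / ((K:ℝ) * m)) = 1 / (m:ℝ) + (N:ℝ) / ((K:ℝ) * m * m) := by
          rw [mul_comm, add_mul, one_mul, div_mul_div_comm, mul_one]
        rw [e1]
        linarith
      have hfac0 : (0:ℝ) ≤ 27 / 26 * ((K:ℝ) + 1)⁻¹ * ((N:ℝ) - 1)⁻¹ * τ ^ m := by
        refine mul_nonneg (mul_nonneg (by positivity) ?_) (pow_nonneg hτ0 m)
        rw [inv_nonneg]; linarith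
      calc 1 / (m:ℝ) * (27 / 26 * ((K:ℝ) + 1)⁻¹ * (1 + (N:ℝ) / ((K:ℝ) * m)) * ((N:ℝ) - 1)⁻¹ * τ ^ m)
          = (27 / 26 * ((K:ℝ) + 1)⁻¹ * ((N:ℝ) - 1)⁻¹ * τ ^ m) *
              (1 / (m:ℝ) * (1 + (N:ℝ) / ((K:ℝ) * m))) := by ring
        _ ≤ (27 / 26 * ((K:ℝ) + 1)⁻¹ * ((N:ℝ) - 1)⁻¹ * τ ^ m) * (1 + (N:ℝ) / (K:ℝ)) :=
            mul_le_mul_of_nonneg_left hfrac hfac0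
        _ = E * τ ^ m := by rw [hE]; ring
    refine le_trans (norm_sum_le _ _) (le_trans (Finset.sum_le_sum hterm_m) ?_)
    rw [← Finset.mul_sum]
    exact mul_le_mul_of_nonneg_left hgeoM hE0
  -- final numeric comparison
  have hb1 : (1:ℝ) ≤ x ^ K - 1 := by
    have := le_self_pow₀ (by linarith : (1:ℝ) ≤ x) (by omega : K ≠ 0)
    linarith
  have ha1 : (1:ℝ) ≤ x - 1 := by linarith
  have hNb : x ^ K ≤ (N:ℝ) ^ K := pow_le_pow_left₀ hx0 (le_of_lt hxN) K
  have hPB : E * ((N:ℝ) ^ K - 1)⁻¹ ≤ x / ((K:ℝ) * (x - 1) * (x ^ K - 1)) := by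
    have hq1 : 27 / 26 * ((K:ℝ) + 1)⁻¹ * (1 + (N:ℝ) / (K:ℝ)) ≤ x / (K:ℝ) := by
      have hkey : 27 / 26 * ((K:ℝ) + (N:ℝ)) ≤ x * ((K:ℝ) + 1) := by
        nlinarith [mul_nonneg (by linarith : (0:ℝ) ≤ (K:ℝ) - 2)
          (by linarith : (0:ℝ) ≤ 26 * x - 27)]
      have e1 : 27 / 26 * ((K:ℝ) + 1)⁻¹ * (1 + (N:ℝ) / (K:ℝ))
          = 27 / 26 * ((K:ℝ) + (N:ℝ)) / (((K:ℝ) + 1) * (K:ℝ)) := by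
        field_simp
      rw [e1, div_le_div_iff₀ (by positivity) hK0]
      nlinarith [mul_le_mul_of_nonneg_right hkey (le_of_lt hK0)]
    have hEsplit : E * ((N:ℝ) ^ K - 1)⁻¹
        = (27 / 26 * ((K:ℝ) + 1)⁻¹ * (1 + (N:ℝ) / (K:ℝ))) *
            (((N:ℝ) - 1)⁻¹ * ((N:ℝ) ^ K - 1)⁻¹) := by
      rw [hE]; ring
    have hinv1 : ((N:ℝ) - 1)⁻¹ ≤ (x - 1)⁻¹ := inv_anti₀ (by linarith) (by linarith)
    have hinv2 : ((N:ℝ) ^ K - 1)⁻¹ ≤ (x ^ K - 1)⁻¹ := inv_anti₀ (by linarith) (by linarith)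
    have hrhs : x / ((K:ℝ) * (x - 1) * (x ^ K - 1)) = x / (K:ℝ) * ((x - 1)⁻¹ * (x ^ K - 1)⁻¹) := by
      rw [div_eq_mul_inv, div_eq_mul_inv, mul_inv, mul_inv]
      ring
    rw [hEsplit, hrhs]
    refine mul_le_mul hq1 ?_ ?_ (by positivity)
    · exact mul_le_mul hinv1 hinv2 (inv_nonneg.2 (by linarith)) (inv_nonneg.2 (by linarith))
    · exact mul_nonneg (inv_nonneg.2 (by linarith)) (inv_nonneg.2 (by linarith))
  -- cardinality of nontrivial characters
  have hcard : (Fintype.card {χ : DirichletCharacter ℂ q // χ ≠ 1} : ℝ) ≤ (q.totient : ℝ) - 1 := by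
    have h1 : Fintype.card {χ : DirichletCharacter ℂ q // χ ≠ 1}
        = Fintype.card (DirichletCharacter ℂ q) - 1 := by
      simp [Fintype.card_subtype_compl]
    have h2 : Fintype.card (DirichletCharacter ℂ q) = q.totient := by
      rw [← Nat.card_eq_fintype_card]
      exact DirichletCharacter.card_eq_totient_of_hasEnoughRootsOfUnity ℂ q
    have htot : 1 ≤ q.totient := Nat.totient_pos.mpr (by omega)
    rw [h1, h2, Nat.cast_sub htot]
    simp
  have hEN0 : 0 ≤ E * ((N:ℝ) ^ K - 1)⁻¹ := mul_nonneg hE0 (inv_nonneg.2 (by linarith))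
  have hstep : ∀ χ : {χ : DirichletCharacter ℂ q // χ ≠ 1},
      ‖(starRingEnd ℂ) ((χ : DirichletCharacter ℂ q) ((a : ℕ) : ZMod q)) *
          ∑ m ∈ Finset.Icc 1 M, (1 / (m : ℂ)) *
            ∑' k : {k : ℕ // K < k},
              ((moebius (k : ℕ) : ℤ) : ℂ) / ((k : ℕ) : ℂ) *
                logL ((χ : DirichletCharacter ℂ q) ^ (k : ℕ)) ((k : ℕ) * m)‖
        ≤ E * ((N:ℝ) ^ K - 1)⁻¹ := by
    intro χ
    rw [norm_mul, RCLike.norm_conj]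
    refine le_trans (mul_le_mul (DirichletCharacter.norm_le_one _ _)
      (hper (χ : DirichletCharacter ℂ q)) (norm_nonneg _) zero_le_one) ?_
    rw [one_mul]
  rw [tsum_fintype]
  refine le_trans (norm_sum_le _ _) ?_
  refine le_trans (Finset.sum_le_sum (fun χ _ => hstep χ)) ?_
  rw [Finset.sum_const, Finset.card_univ, nsmul_eq_mul]
  refine le_trans (mul_le_mul hcard hPB hEN0
    (le_trans (Nat.cast_nonneg _) hcard)) ?_
  exact le_of_eq (mul_div_assoc _ _ _).symm
end
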